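/- Let α, β > 0 and k a positive integer, and let F be the solution to the Beta Stein equation for h(x) = x^k given by F(x) = -∑_{j=0}^{k-1} c_j x^{k-j} + C with c_j = [1/((k-j)(k-j-1+α+β))] ∏_{i=1}^{j} (k-i+α)/(k-i+α+β) and C a constant. Then for all x ∈ [0,1], |F'(x)| ≤ k/(α+β). -/

import Mathlib

open Finset

/-- First-derivative bound for the polynomial solution to the Beta(α,β) Stein
equation for `h(x) = x^k`: `|F'(x)| ≤ k/(α+β)` on `[0,1]`. -/
theorem stmt_11 (α β : ℝ) (hα : 0 < α) (hβ : 0 < β) (k : ℕ) (hk : 0 < k)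
    (C : ℝ) (F : ℝ → ℝ)
    (hF : ∀ x : ℝ, F x =
      -∑ j ∈ Finset.range k,
          (1 / (((k : ℝ) - j) * ((k : ℝ) - j - 1 + α + β)))
            * (∏ i ∈ Finset.Icc 1 j, ((k : ℝ) - i + α) / ((k : ℝ) - i + α + β))
            * x ^ (k - j)
        + C) :
    ∀ x ∈ Set.Icc (0 : ℝ) 1, |deriv F x| ≤ k / (α + β) := by
  intro x hx
  obtain ⟨hx0, hx1⟩ := hx
  set c : ℕ → ℝ := fun j => (1 / (((k : ℝ) - j) * ((k : ℝ) - j - 1 + α + β)))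
            * (∏ i ∈ Finset.Icc 1 j, ((k : ℝ) - i + α) / ((k : ℝ) - i + α + β)) with hc
  have hFeq : F = fun y => -∑ j ∈ Finset.range k, c j * y ^ (k - j) + C := by
    funext y; rw [hF y]
  have hder : HasDerivAt F
      (-∑ j ∈ Finset.range k, c j * (((k - j : ℕ) : ℝ) * x ^ (k - j - 1))) x := by
    rw [hFeq]
    exact ((HasDerivAt.fun_sum (fun j _ =>
      (hasDerivAt_pow (k - j) x).const_mul (c j))).neg).add_const C
  rw [hder.deriv, abs_neg]
  have hab : 0 < α + β := by linarith
  calc |∑ j ∈ Finset.range k, c j * (((k - j : ℕ) : ℝ) * x ^ (k - j - 1))|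
      ≤ ∑ j ∈ Finset.range k, |c j * (((k - j : ℕ) : ℝ) * x ^ (k - j - 1))| :=
        Finset.abs_sum_le_sum_abs _ _
    _ ≤ ∑ j ∈ Finset.range k, 1 / (α + β) := by
        apply Finset.sum_le_sum
        intro j hj
        have hjk : j < k := Finset.mem_range.mp hj
        have hjk' : (j : ℝ) + 1 ≤ k := by exact_mod_cast hjk
        have hn1 : (1 : ℝ) ≤ (k : ℝ) - j := by linarith
        have hn : (0 : ℝ) < (k : ℝ) - j := by linarith
        have hd : (0 : ℝ) < (k : ℝ) - j - 1 + α + β := by linarith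
        have hcast : ((k - j : ℕ) : ℝ) = (k : ℝ) - j := by
          push_cast [Nat.cast_sub hjk.le]; ring
        set P : ℝ := ∏ i ∈ Finset.Icc 1 j, ((k : ℝ) - i + α) / ((k : ℝ) - i + α + β)
          with hPdef
        have hfac : ∀ i ∈ Finset.Icc 1 j, (0:ℝ) ≤ ((k : ℝ) - i + α) / ((k : ℝ) - i + α + β)
            ∧ ((k : ℝ) - i + α) / ((k : ℝ) - i + α + β) ≤ 1 := by
          intro i hi
          have hi2 : (i : ℝ) ≤ j := by exact_mod_cast (Finset.mem_Icc.mp hi).2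
          have hnum : (0:ℝ) < (k : ℝ) - i + α := by linarith
          have hden : (0:ℝ) < (k : ℝ) - i + α + β := by linarith
          constructor
          · positivity
          · rw [div_le_one hden]; linarith
        have hP0 : 0 ≤ P := Finset.prod_nonneg fun i hi => (hfac i hi).1
        have hP1 : P ≤ 1 := Finset.prod_le_one (fun i hi => (hfac i hi).1)
          (fun i hi => (hfac i hi).2)
        have hxm0 : 0 ≤ x ^ (k - j - 1) := pow_nonneg hx0 _
        have hxm1 : x ^ (k - j - 1) ≤ 1 := pow_le_one₀ hx0 hx1
        have hterm : c j * (((k - j : ℕ) : ℝ) * x ^ (k - j - 1))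
            = (P * x ^ (k - j - 1)) / ((k : ℝ) - j - 1 + α + β) := by
          rw [hcast]; simp only [hc]; rw [← hPdef]
          field_simp
        rw [hterm, abs_of_nonneg (by positivity)]
        apply div_le_div₀ zero_le_one _ hab (by linarith)
        exact mul_le_one₀ hP1 hxm0 hxm1
    _ = k / (α + β) := by
        rw [Finset.sum_const, Finset.card_range, nsmul_eq_mul]
        ring
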